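/- For all p, q ∈ (0,1) with p ≠ q and all self-similar measures μ_p and μ_q, the first Wasserstein distance satisfies the lower bound W₁(μ_p, μ_q) ≥ ((t₂−t₁)/(1−c)) · |p−q|. -/
import Mathlib


open MeasureTheory

/-- The first Wasserstein distance: the infimum over couplings of μ and ν of the
first moment ∫ |x − y| dγ. -/
noncomputable def wasserstein1 (μ ν : Measure ℝ) : ℝ :=
  sInf { a : ℝ | ∃ γ : Measure (ℝ × ℝ), IsProbabilityMeasure γ ∧
    γ.map Prod.fst = μ ∧ γ.map Prod.snd = ν ∧ a = ∫ z : ℝ × ℝ, |z.1 - z.2| ∂γ }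


lemma ae_mem_Icc_of_compl_zero {μ : Measure ℝ} (h : μ ((Set.Icc (0:ℝ) 1)ᶜ) = 0) :
    ∀ᵐ x ∂μ, x ∈ Set.Icc (0:ℝ) 1 := by
  rw [ae_iff]; exact h

lemma integrable_id_of_supp {μ : Measure ℝ} [IsProbabilityMeasure μ]
    (h : μ ((Set.Icc (0:ℝ) 1)ᶜ) = 0) : Integrable (fun x : ℝ => x) μ := by
  refine Integrable.mono' (integrable_const 1) aestronglyMeasurable_id ?_
  filter_upwards [ae_mem_Icc_of_compl_zero h] with x hx
  rw [Real.norm_eq_abs, abs_le]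
  exact ⟨by linarith [hx.1], hx.2⟩

lemma mean_eq (c t₁ t₂ : ℝ) (hc0 : 0 < c) (hc1 : c < 1) (p : ℝ) (hp0 : 0 ≤ p) (hp1 : p ≤ 1)
    (μ : Measure ℝ) (hμ : IsProbabilityMeasure μ) (hsupp : μ ((Set.Icc (0:ℝ) 1)ᶜ) = 0)
    (hss : μ = ENNReal.ofReal p • μ.map (fun x : ℝ => c * x + t₁)
             + ENNReal.ofReal (1 - p) • μ.map (fun x : ℝ => c * x + t₂)) :
    ∫ x, x ∂μ = (t₂ - p * (t₂ - t₁)) / (1 - c) := by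
  have hint : Integrable (fun x : ℝ => x) μ := integrable_id_of_supp hsupp
  set m := ∫ x, x ∂μ with hm
  have hmeas1 : Measurable (fun x : ℝ => c * x + t₁) := by fun_prop
  have hmeas2 : Measurable (fun x : ℝ => c * x + t₂) := by fun_prop
  have hf1 : Integrable (fun x : ℝ => c * x + t₁) μ :=
    (hint.const_mul c).add (integrable_const t₁)
  have hf2 : Integrable (fun x : ℝ => c * x + t₂) μ :=
    (hint.const_mul c).add (integrable_const t₂)
  have hmap1 : ∫ x, x ∂(μ.map (fun x : ℝ => c * x + t₁)) = c * m + t₁ := by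
    have h := integral_map (f := fun x : ℝ => x) hmeas1.aemeasurable
      aestronglyMeasurable_id (μ := μ)
    rw [h, integral_add (hint.const_mul c) (integrable_const t₁), integral_const_mul,
      integral_const]
    simp [hm]
  have hmap2 : ∫ x, x ∂(μ.map (fun x : ℝ => c * x + t₂)) = c * m + t₂ := by
    have h := integral_map (f := fun x : ℝ => x) hmeas2.aemeasurable
      aestronglyMeasurable_id (μ := μ)
    rw [h, integral_add (hint.const_mul c) (integrable_const t₂), integral_const_mul,
      integral_const]
    simp [hm]
  have hint1 : Integrable (fun x : ℝ => x) (μ.map (fun x : ℝ => c * x + t₁)) :=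
    (integrable_map_measure aestronglyMeasurable_id hmeas1.aemeasurable).mpr hf1
  have hint2 : Integrable (fun x : ℝ => x) (μ.map (fun x : ℝ => c * x + t₂)) :=
    (integrable_map_measure aestronglyMeasurable_id hmeas2.aemeasurable).mpr hf2
  have key : m = p * (c * m + t₁) + (1 - p) * (c * m + t₂) := by
    conv_lhs => rw [hm, hss]
    rw [integral_add_measure (hint1.smul_measure (by simp)) (hint2.smul_measure (by simp)),
      integral_smul_measure, integral_smul_measure, ENNReal.toReal_ofReal hp0,
      ENNReal.toReal_ofReal (by linarith), hmap1, hmap2]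
    simp [smul_eq_mul]
  have h1c : (1 : ℝ) - c ≠ 0 := by linarith
  field_simp
  nlinarith [key]

/-- The lower bound for the first Wasserstein distance between two self-similar
measures. -/
theorem wasserstein1_lower_bound
    (c t₁ t₂ : ℝ) (hc : c ∈ Set.Ioc (0:ℝ) (1/2))
    (ht₁ : t₁ ∈ Set.Icc (0:ℝ) (1 - 2*c)) (ht₂ : t₂ ∈ Set.Icc (t₁ + c) (1 - c))
    (p q : ℝ) (hp : p ∈ Set.Ioo (0:ℝ) 1) (hq : q ∈ Set.Ioo (0:ℝ) 1) (hpq : p ≠ q)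
    (μp : Measure ℝ) (hμp : IsProbabilityMeasure μp)
    (hsuppp : μp ((Set.Icc (0:ℝ) 1)ᶜ) = 0)
    (hssp : μp = ENNReal.ofReal p • μp.map (fun x : ℝ => c * x + t₁)
               + ENNReal.ofReal (1 - p) • μp.map (fun x : ℝ => c * x + t₂))
    (μq : Measure ℝ) (hμq : IsProbabilityMeasure μq)
    (hsuppq : μq ((Set.Icc (0:ℝ) 1)ᶜ) = 0)
    (hssq : μq = ENNReal.ofReal q • μq.map (fun x : ℝ => c * x + t₁)
               + ENNReal.ofReal (1 - q) • μq.map (fun x : ℝ => c * x + t₂)) :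
    (t₂ - t₁) / (1 - c) * |p - q| ≤ wasserstein1 μp μq := by
  obtain ⟨hc0, hc12⟩ := hc
  have hc1 : c < 1 := by linarith
  have hmp : ∫ x, x ∂μp = (t₂ - p * (t₂ - t₁)) / (1 - c) :=
    mean_eq c t₁ t₂ hc0 hc1 p hp.1.le hp.2.le μp hμp hsuppp hssp
  have hmq : ∫ x, x ∂μq = (t₂ - q * (t₂ - t₁)) / (1 - c) :=
    mean_eq c t₁ t₂ hc0 hc1 q hq.1.le hq.2.le μq hμq hsuppq hssq
  have hdiff : ∫ x, x ∂μp - ∫ x, x ∂μq = (q - p) * (t₂ - t₁) / (1 - c) := by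
    rw [hmp, hmq, div_sub_div_same]; ring
  have habs : |∫ x, x ∂μp - ∫ x, x ∂μq| = (t₂ - t₁) / (1 - c) * |p - q| := by
    rw [hdiff, abs_div, abs_mul, abs_of_pos (show (0:ℝ) < 1 - c by linarith),
      abs_of_pos (show (0:ℝ) < t₂ - t₁ by linarith [ht₂.1]), abs_sub_comm q p]
    ring
  rw [← habs, wasserstein1]
  apply le_csInf
  · exact ⟨∫ z : ℝ × ℝ, |z.1 - z.2| ∂(μp.prod μq), μp.prod μq, inferInstance,
      Measure.fst_prod, Measure.snd_prod, rfl⟩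
  · rintro a ⟨γ, hγprob, hγ1, hγ2, rfl⟩
    have hae1 : ∀ᵐ z ∂γ, z.1 ∈ Set.Icc (0:ℝ) 1 := by
      have h0 : γ (Prod.fst ⁻¹' (Set.Icc (0:ℝ) 1)ᶜ) = 0 := by
        rw [← Measure.map_apply measurable_fst (measurableSet_Icc.compl), hγ1]
        exact hsuppp
      rw [ae_iff]; exact h0
    have hae2 : ∀ᵐ z ∂γ, z.2 ∈ Set.Icc (0:ℝ) 1 := by
      have h0 : γ (Prod.snd ⁻¹' (Set.Icc (0:ℝ) 1)ᶜ) = 0 := by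
        rw [← Measure.map_apply measurable_snd (measurableSet_Icc.compl), hγ2]
        exact hsuppq
      rw [ae_iff]; exact h0
    have hint1 : Integrable (fun z : ℝ × ℝ => z.1) γ := by
      refine Integrable.mono' (integrable_const 1) measurable_fst.aestronglyMeasurable ?_
      filter_upwards [hae1] with z hz
      rw [Real.norm_eq_abs, abs_le]; exact ⟨by linarith [hz.1], hz.2⟩
    have hint2 : Integrable (fun z : ℝ × ℝ => z.2) γ := by
      refine Integrable.mono' (integrable_const 1) measurable_snd.aestronglyMeasurable ?_
      filter_upwards [hae2] with z hz
      rw [Real.norm_eq_abs, abs_le]; exact ⟨by linarith [hz.1], hz.2⟩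
    have heq1 : ∫ z : ℝ × ℝ, z.1 ∂γ = ∫ x, x ∂μp := by
      rw [← hγ1]
      exact (integral_map (f := fun x : ℝ => x) measurable_fst.aemeasurable
        aestronglyMeasurable_id).symm
    have heq2 : ∫ z : ℝ × ℝ, z.2 ∂γ = ∫ x, x ∂μq := by
      rw [← hγ2]
      exact (integral_map (f := fun x : ℝ => x) measurable_snd.aemeasurable
        aestronglyMeasurable_id).symm
    calc |∫ x, x ∂μp - ∫ x, x ∂μq| = |∫ z : ℝ × ℝ, (z.1 - z.2) ∂γ| := by
          rw [integral_sub hint1 hint2, heq1, heq2]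
      _ ≤ ∫ z : ℝ × ℝ, |z.1 - z.2| ∂γ := by
          have := norm_integral_le_integral_norm (μ := γ) (fun z : ℝ × ℝ => z.1 - z.2)
          simpa [Real.norm_eq_abs] using this
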